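/- Let f be c₁-strongly convex relative to ‖·‖_A with c₁ > 0 and also differentiable with L-Lipschitz gradient, let g be convex, and let A have full row rank. Set d = L/λ_min(AAᵀ) and V^k = ‖λ^k − λ*‖² + t²‖B(z^k − z*)‖². If 0 < t < √(c₁L/λ_min(AAᵀ)), then the ADMM iterates satisfy V^{k+1} ≤ (1 − 2c₁t/(c₁d + 2c₁t + t²))·V^k for all k ≥ 0. -/

import Mathlib

open Matrix

namespace ADMM15

lemma dp_self_nonneg {N : ℕ} (p : Fin N → ℝ) : 0 ≤ p ⬝ᵥ p :=
  Finset.sum_nonneg fun _ _ => mul_self_nonneg _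

lemma dp_eq_zero {N : ℕ} {p : Fin N → ℝ} (h : p ⬝ᵥ p ≤ 0) : p = 0 := by
  funext i
  by_contra hi
  have h2 : 0 < p i * p i := mul_self_pos.mpr hi
  have h3 : 0 < p ⬝ᵥ p :=
    Finset.sum_pos' (fun j _ => mul_self_nonneg _) ⟨i, Finset.mem_univ i, h2⟩
  linarith

lemma dp_cs {N : ℕ} (p q : Fin N → ℝ) :
    p ⬝ᵥ q ≤ Real.sqrt (p ⬝ᵥ p) * Real.sqrt (q ⬝ᵥ q) := by
  have h := Finset.sum_mul_sq_le_sq_mul_sq Finset.univ p q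
  have h1 : (p ⬝ᵥ q)^2 ≤ (p ⬝ᵥ p) * (q ⬝ᵥ q) := by
    simpa [dotProduct, sq] using h
  calc p ⬝ᵥ q ≤ |p ⬝ᵥ q| := le_abs_self _
    _ = Real.sqrt ((p ⬝ᵥ q)^2) := (Real.sqrt_sq_eq_abs _).symm
    _ ≤ Real.sqrt ((p ⬝ᵥ p) * (q ⬝ᵥ q)) := Real.sqrt_le_sqrt h1
    _ = _ := Real.sqrt_mul (dp_self_nonneg p) _

lemma sqrt_dp_smul {N : ℕ} (β : ℝ) (hβ : 0 ≤ β) (d : Fin N → ℝ) :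
    Real.sqrt ((β • d) ⬝ᵥ (β • d)) = β * Real.sqrt (d ⬝ᵥ d) := by
  have : (β • d) ⬝ᵥ (β • d) = (β*β) * (d ⬝ᵥ d) := by
    rw [smul_dotProduct, dotProduct_smul, smul_eq_mul, smul_eq_mul]; ring
  rw [this, Real.sqrt_mul (mul_self_nonneg β), Real.sqrt_mul_self hβ]

lemma transpose_dot {R N : ℕ} (M : Matrix (Fin R) (Fin N) ℝ) (vv : Fin R → ℝ) (c : Fin N → ℝ) :
    (Mᵀ *ᵥ vv) ⬝ᵥ c = vv ⬝ᵥ (M *ᵥ c) := by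
  rw [Matrix.mulVec_transpose, ← Matrix.dotProduct_mulVec]

lemma le_of_theta {a c b : ℝ} (h : ∀ θ : ℝ, 0 < θ → θ ≤ 1 → a ≤ c + θ * b) : a ≤ c := by
  rcases le_or_gt b 0 with hb | hb
  · have := h 1 one_pos le_rfl
    nlinarith
  · refine le_of_forall_pos_le_add fun ε hε => ?_
    have hθ : (0:ℝ) < min 1 (ε / b) := lt_min one_pos (div_pos hε hb)
    have h1 := h _ hθ (min_le_left _ _)
    have h2 : min 1 (ε / b) * b ≤ ε := by
      calc min 1 (ε/b) * b ≤ (ε/b)*b := mul_le_mul_of_nonneg_right (min_le_right _ _) hb.le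
        _ = ε := div_mul_cancel₀ _ hb.ne'
    linarith

lemma le_of_theta_scaled {a c b : ℝ} (h : ∀ θ : ℝ, 0 < θ → θ ≤ 1 → θ*a ≤ θ*c + θ^2*b) : a ≤ c := by
  refine le_of_theta (b := b) fun θ h1 h2 => ?_
  have h3 := h θ h1 h2
  have h4 : θ*a ≤ θ*(c + θ*b) := by nlinarith
  exact le_of_mul_le_mul_left h4 h1


lemma convex_of_subgrad {N : ℕ} {f : (Fin N → ℝ) → ℝ} {f' : (Fin N → ℝ) → Fin N → ℝ}
    (hsub : ∀ x y, f x + f' x ⬝ᵥ (y - x) ≤ f y) : ConvexOn ℝ Set.univ f := by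
  refine ⟨convex_univ, fun p _ q _ α β hα hβ hab => ?_⟩
  set w := α • p + β • q with hw
  have h1 := hsub w p
  have h2 := hsub w q
  have hz : α • (f' w ⬝ᵥ (p - w)) + β • (f' w ⬝ᵥ (q - w)) = 0 := by
    rw [← dotProduct_smul, ← dotProduct_smul, ← dotProduct_add]
    have : α • (p - w) + β • (q - w) = (α • p + β • q) - (α + β) • w := by module
    rw [this, hab, one_smul, hw, sub_self, dotProduct_zero]
  have h1' := mul_le_mul_of_nonneg_left h1 hα
  have h2' := mul_le_mul_of_nonneg_left h2 hβ
  simp only [smul_eq_mul] at hz ⊢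
  have hfw : α * f w + β * f w = f w := by rw [← add_mul, hab, one_mul]
  nlinarith [hz, hfw]

lemma dp_expand_add_smul {R : ℕ} (Rv Md : Fin R → ℝ) (θ : ℝ) :
    (Rv + θ • Md) ⬝ᵥ (Rv + θ • Md)
      = Rv ⬝ᵥ Rv + 2*θ*(Rv ⬝ᵥ Md) + θ^2*(Md ⬝ᵥ Md) := by
  rw [dotProduct_add, add_dotProduct, add_dotProduct, dotProduct_smul, smul_dotProduct,
    smul_dotProduct, dotProduct_smul, dotProduct_comm Md Rv]
  simp only [smul_eq_mul]; ring

lemma subgrad_of_argmin {N R : ℕ} {F : (Fin N → ℝ) → ℝ} (hF : ConvexOn ℝ Set.univ F)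
    (M : Matrix (Fin R) (Fin N) ℝ) (c0 : Fin N → ℝ) (r0 : Fin R → ℝ)
    (τ : ℝ) (x0 : Fin N → ℝ)
    (hmin : ∀ x', F x0 + c0 ⬝ᵥ x0 + τ/2 * ((M *ᵥ x0 + r0) ⬝ᵥ (M *ᵥ x0 + r0))
        ≤ F x' + c0 ⬝ᵥ x' + τ/2 * ((M *ᵥ x' + r0) ⬝ᵥ (M *ᵥ x' + r0))) :
    ∀ y, F x0 + (-c0 - τ • (Mᵀ *ᵥ (M *ᵥ x0 + r0))) ⬝ᵥ (y - x0) ≤ F y := by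
  intro y
  set d := y - x0 with hd
  set Rv := M *ᵥ x0 + r0 with hR
  have hxi : (-c0 - τ • (Mᵀ *ᵥ Rv)) ⬝ᵥ d = -(c0 ⬝ᵥ d) - τ * (Rv ⬝ᵥ (M *ᵥ d)) := by
    rw [sub_dotProduct, neg_dotProduct, smul_dotProduct, smul_eq_mul,
      transpose_dot]
  rw [add_comm (F x0)]
  rw [hxi]
  have goal' : F x0 + (-(c0 ⬝ᵥ d) - τ * (Rv ⬝ᵥ (M *ᵥ d))) ≤ F y := by
    apply le_of_theta_scaled (b := τ/2 * ((M *ᵥ d) ⬝ᵥ (M *ᵥ d)))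
    intro θ hθ hθ1
    have hxθ : x0 + θ • d = (1-θ) • x0 + θ • y := by rw [hd]; module
    have hconv : F (x0 + θ • d) ≤ (1-θ) * F x0 + θ * F y := by
      rw [hxθ]
      have := hF.2 (Set.mem_univ x0) (Set.mem_univ y) (by linarith : (0:ℝ) ≤ 1 - θ)
        hθ.le (by ring)
      simpa using this
    have hm := hmin (x0 + θ • d)
    have hquad : M *ᵥ (x0 + θ • d) + r0 = Rv + θ • (M *ᵥ d) := by
      rw [Matrix.mulVec_add, Matrix.mulVec_smul, hR]; abel
    rw [hquad] at hm
    have hexp := dp_expand_add_smul Rv (M *ᵥ d) θ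
    rw [hexp] at hm
    have hlin : c0 ⬝ᵥ (x0 + θ • d) = c0 ⬝ᵥ x0 + θ * (c0 ⬝ᵥ d) := by
      rw [dotProduct_add, dotProduct_smul, smul_eq_mul]
    rw [hlin] at hm
    nlinarith [hm, hconv]
  linarith [goal']

lemma shift_subgrad {N R : ℕ} {f : (Fin N → ℝ) → ℝ} {f' : (Fin N → ℝ) → Fin N → ℝ}
    {c₁ : ℝ} {A : Matrix (Fin R) (Fin N) ℝ}
    (hf : ConvexOn ℝ Set.univ (fun y => f y - c₁ / 2 * ((A *ᵥ y) ⬝ᵥ (A *ᵥ y))))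
    (hsub : ∀ x y, f x + f' x ⬝ᵥ (y - x) ≤ f y) (zz yy : Fin N → ℝ) :
    (f zz - c₁/2 * ((A *ᵥ zz) ⬝ᵥ (A *ᵥ zz)))
      + (f' zz - c₁ • (Aᵀ *ᵥ (A *ᵥ zz))) ⬝ᵥ (yy - zz)
      ≤ f yy - c₁/2 * ((A *ᵥ yy) ⬝ᵥ (A *ᵥ yy)) := by
  set d := yy - zz with hd
  have hxi : (f' zz - c₁ • (Aᵀ *ᵥ (A *ᵥ zz))) ⬝ᵥ d
      = f' zz ⬝ᵥ d - c₁ * ((A *ᵥ zz) ⬝ᵥ (A *ᵥ d)) := by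
    rw [sub_dotProduct, smul_dotProduct, smul_eq_mul, transpose_dot]
  rw [add_comm, hxi]
  have goal' : (f zz - c₁/2 * ((A *ᵥ zz) ⬝ᵥ (A *ᵥ zz)))
      + (f' zz ⬝ᵥ d - c₁ * ((A *ᵥ zz) ⬝ᵥ (A *ᵥ d)))
      ≤ (f yy - c₁/2 * ((A *ᵥ yy) ⬝ᵥ (A *ᵥ yy))) := by
    apply le_of_theta_scaled (b := c₁/2 * ((A *ᵥ d) ⬝ᵥ (A *ᵥ d)))
    intro θ hθ hθ1
    have hxθ : zz + θ • d = (1-θ) • zz + θ • yy := by rw [hd]; module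
    have hconv : f (zz + θ • d) - c₁/2 * ((A *ᵥ (zz + θ • d)) ⬝ᵥ (A *ᵥ (zz + θ • d)))
        ≤ (1-θ) * (f zz - c₁/2 * ((A *ᵥ zz) ⬝ᵥ (A *ᵥ zz)))
          + θ * (f yy - c₁/2 * ((A *ᵥ yy) ⬝ᵥ (A *ᵥ yy))) := by
      have := hf.2 (Set.mem_univ zz) (Set.mem_univ yy) (by linarith : (0:ℝ) ≤ 1 - θ)
        hθ.le (by ring)
      simp only [smul_eq_mul] at this
      rw [hxθ]
      simpa using this
    have hlow : f zz + θ * (f' zz ⬝ᵥ d) ≤ f (zz + θ • d) := by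
      have h0 := hsub zz (zz + θ • d)
      have : (zz + θ • d) - zz = θ • d := by abel
      rw [this, dotProduct_smul, smul_eq_mul] at h0
      linarith
    have hquad : (A *ᵥ (zz + θ • d)) ⬝ᵥ (A *ᵥ (zz + θ • d))
        = (A *ᵥ zz) ⬝ᵥ (A *ᵥ zz) + 2*θ*((A *ᵥ zz) ⬝ᵥ (A *ᵥ d)) + θ^2*((A *ᵥ d) ⬝ᵥ (A *ᵥ d)) := by
      have : A *ᵥ (zz + θ • d) = A *ᵥ zz + θ • (A *ᵥ d) := by
        rw [Matrix.mulVec_add, Matrix.mulVec_smul]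
      rw [this, dp_expand_add_smul]
    rw [hquad] at hconv
    nlinarith [hconv, hlow]
  linarith [goal']

lemma strong_mono {N R : ℕ} {f : (Fin N → ℝ) → ℝ} {f' : (Fin N → ℝ) → Fin N → ℝ}
    {c₁ : ℝ} {A : Matrix (Fin R) (Fin N) ℝ}
    (hf : ConvexOn ℝ Set.univ (fun y => f y - c₁ / 2 * ((A *ᵥ y) ⬝ᵥ (A *ᵥ y))))
    (hsub : ∀ x y, f x + f' x ⬝ᵥ (y - x) ≤ f y) (xx yy : Fin N → ℝ) :
    c₁ * ((A *ᵥ (xx - yy)) ⬝ᵥ (A *ᵥ (xx - yy))) ≤ (f' xx - f' yy) ⬝ᵥ (xx - yy) := by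
  have h1 := shift_subgrad hf hsub xx yy
  have h2 := shift_subgrad hf hsub yy xx
  simp only [sub_dotProduct, dotProduct_sub, Matrix.mulVec_sub, smul_dotProduct,
    smul_eq_mul, transpose_dot] at h1 h2 ⊢
  have e6 : (A *ᵥ xx) ⬝ᵥ (A *ᵥ yy) = (A *ᵥ yy) ⬝ᵥ (A *ᵥ xx) := dotProduct_comm _ _
  nlinarith [h1, h2, e6]

lemma sum_range_cast (N : ℕ) : ∑ i ∈ Finset.range N, (((i:ℝ)) + 1) = (N:ℝ)*((N:ℝ)+1)/2 := by
  induction N with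
  | zero => simp
  | succ k ih =>
    rw [Finset.sum_range_succ, ih]
    push_cast
    ring

lemma descent {N : ℕ} {f : (Fin N → ℝ) → ℝ} {f' : (Fin N → ℝ) → Fin N → ℝ} {L : ℝ}
    (hL : 0 < L)
    (hsub : ∀ x y, f x + f' x ⬝ᵥ (y - x) ≤ f y)
    (hlip : ∀ x y, Real.sqrt ((f' x - f' y) ⬝ᵥ (f' x - f' y))
      ≤ L * Real.sqrt ((x - y) ⬝ᵥ (x - y)))
    (y d : Fin N → ℝ) : f (y + d) ≤ f y + f' y ⬝ᵥ d + L/2 * (d ⬝ᵥ d) := by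
  have hdd : 0 ≤ d ⬝ᵥ d := dp_self_nonneg d
  have key : ∀ M : ℕ, 0 < M →
      f (y + d) ≤ f y + f' y ⬝ᵥ d + L/2 * (d ⬝ᵥ d) + (L/2 * (d ⬝ᵥ d)) * (1/(M:ℝ)) := by
    intro M hM
    have hc : (0:ℝ) < (M:ℝ) := by exact_mod_cast hM
    set c : ℝ := (M:ℝ) with hcdef
    set p : ℕ → (Fin N → ℝ) := fun i => y + ((i:ℝ)/c) • d with hp
    have tele : ∑ i ∈ Finset.range M, (f (p (i+1)) - f (p i)) = f (p M) - f (p 0) :=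
      Finset.sum_range_sub (fun i => f (p i)) M
    have hpM : p M = y + d := by
      simp only [hp]
      rw [div_self hc.ne', one_smul]
    have hp0 : p 0 = y := by
      simp only [hp]
      norm_num
    have step : ∀ i ∈ Finset.range M, f (p (i+1)) - f (p i)
        ≤ (1/c)*(f' y ⬝ᵥ d) + (1/c)*(L*((((i:ℝ))+1)/c)*(d ⬝ᵥ d)) := by
      intro i _
      have hβ : (0:ℝ) ≤ ((i:ℝ)+1)/c := by positivity
      have hvd : p i - p (i+1) = (-(1/c)) • d := by
        simp only [hp]
        rw [add_sub_add_left_eq_sub, ← sub_smul]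
        congr 1
        push_cast
        field_simp
        ring
      have h0 := hsub (p (i+1)) (p i)
      rw [hvd, dotProduct_smul, smul_eq_mul] at h0
      have hfp : f (p (i+1)) - f (p i) ≤ (1/c) * (f' (p (i+1)) ⬝ᵥ d) := by linarith
      have hdiff : (f' (p (i+1)) - f' y) ⬝ᵥ d ≤ L*((((i:ℝ))+1)/c)*(d ⬝ᵥ d) := by
        have hcs := dp_cs (f' (p (i+1)) - f' y) d
        have hl := hlip (p (i+1)) y
        have hpy : p (i+1) - y = ((((i:ℝ))+1)/c) • d := by
          simp only [hp]
          push_cast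
          abel
        rw [hpy, sqrt_dp_smul _ hβ d] at hl
        have hs : Real.sqrt ((f' (p (i+1)) - f' y) ⬝ᵥ (f' (p (i+1)) - f' y)) * Real.sqrt (d ⬝ᵥ d)
            ≤ (L * ((((i:ℝ))+1)/c * Real.sqrt (d ⬝ᵥ d))) * Real.sqrt (d ⬝ᵥ d) :=
          mul_le_mul_of_nonneg_right hl (Real.sqrt_nonneg _)
        have hss : Real.sqrt (d ⬝ᵥ d) * Real.sqrt (d ⬝ᵥ d) = d ⬝ᵥ d :=
          Real.mul_self_sqrt hdd
        calc (f' (p (i+1)) - f' y) ⬝ᵥ d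
            ≤ Real.sqrt ((f' (p (i+1)) - f' y) ⬝ᵥ (f' (p (i+1)) - f' y)) * Real.sqrt (d ⬝ᵥ d) := hcs
          _ ≤ (L * ((((i:ℝ))+1)/c * Real.sqrt (d ⬝ᵥ d))) * Real.sqrt (d ⬝ᵥ d) := hs
          _ = L*((((i:ℝ))+1)/c)*(d ⬝ᵥ d) := by
              rw [mul_assoc, mul_assoc, hss]; ring
      have hsplit : f' (p (i+1)) ⬝ᵥ d = f' y ⬝ᵥ d + (f' (p (i+1)) - f' y) ⬝ᵥ d := by
        rw [sub_dotProduct]; ring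
      have h1c : (0:ℝ) < 1/c := by positivity
      have hd2 := mul_le_mul_of_nonneg_left hdiff h1c.le
      have hsplit' : (1/c) * (f' (p (i+1)) ⬝ᵥ d)
          = (1/c) * (f' y ⬝ᵥ d) + (1/c) * ((f' (p (i+1)) - f' y) ⬝ᵥ d) := by
        rw [hsplit]; ring
      linarith [hfp, hd2, hsplit']
    have hsum := Finset.sum_le_sum step
    rw [tele, hpM, hp0] at hsum
    have hsum2 : ∑ i ∈ Finset.range M, ((1/c)*(f' y ⬝ᵥ d) + (1/c)*(L*((((i:ℝ))+1)/c)*(d ⬝ᵥ d)))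
        = f' y ⬝ᵥ d + L/2 * (d ⬝ᵥ d) + (L/2 * (d ⬝ᵥ d)) * (1/c) := by
      rw [Finset.sum_add_distrib, Finset.sum_const, Finset.card_range]
      have e1 : ∑ i ∈ Finset.range M, (1/c)*(L*((((i:ℝ))+1)/c)*(d ⬝ᵥ d))
          = (L*(d ⬝ᵥ d)/c^2) * ∑ i ∈ Finset.range M, (((i:ℝ))+1) := by
        rw [Finset.mul_sum]
        apply Finset.sum_congr rfl
        intro i _
        field_simp
      rw [e1, sum_range_cast, nsmul_eq_mul, ← hcdef]
      field_simp
      ring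
    rw [hsum2] at hsum
    linarith
  -- conclude
  refine le_of_forall_pos_le_add fun ε hε => ?_
  obtain ⟨M, hM⟩ := exists_nat_gt ((L/2 * (d ⬝ᵥ d))/ε)
  have hM0 : 0 < M := by
    by_contra h
    push_neg at h
    interval_cases M
    simp only [Nat.cast_zero] at hM
    have : (0:ℝ) ≤ L / 2 * (d ⬝ᵥ d) / ε := by positivity
    linarith
  have hMc : (0:ℝ) < (M:ℝ) := by exact_mod_cast hM0
  have h1 := key M hM0
  have h2 : (L/2 * (d ⬝ᵥ d)) * (1/(M:ℝ)) ≤ ε := by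
    rw [div_lt_iff₀ hε] at hM
    rw [mul_one_div, div_le_iff₀ hMc]
    nlinarith [hM]
  linarith

lemma coco {N : ℕ} {f : (Fin N → ℝ) → ℝ} {f' : (Fin N → ℝ) → Fin N → ℝ} {L : ℝ}
    (hL : 0 < L)
    (hsub : ∀ x y, f x + f' x ⬝ᵥ (y - x) ≤ f y)
    (hlip : ∀ x y, Real.sqrt ((f' x - f' y) ⬝ᵥ (f' x - f' y))
      ≤ L * Real.sqrt ((x - y) ⬝ᵥ (x - y)))
    (xx yy : Fin N → ℝ) :
    (f' xx - f' yy) ⬝ᵥ (f' xx - f' yy) ≤ L * ((f' xx - f' yy) ⬝ᵥ (xx - yy)) := by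
  have half : ∀ u v : Fin N → ℝ,
      f u + f' u ⬝ᵥ (v - u) + 1/(2*L) * ((f' v - f' u) ⬝ᵥ (f' v - f' u)) ≤ f v := by
    intro u v
    set Δ : Fin N → ℝ := f' v - f' u with hΔ
    have hd := descent hL hsub hlip v ((-(1/L)) • Δ)
    have hs := hsub u (v + (-(1/L)) • Δ)
    have e1 : f' u ⬝ᵥ (v + (-(1/L)) • Δ - u) = f' u ⬝ᵥ (v - u) - (1/L) * (f' u ⬝ᵥ Δ) := by
      have : v + (-(1/L)) • Δ - u = (v - u) + (-(1/L)) • Δ := by abel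
      rw [this, dotProduct_add, dotProduct_smul, smul_eq_mul]
      ring
    have e2 : f' v ⬝ᵥ ((-(1/L)) • Δ) = -(1/L) * (f' v ⬝ᵥ Δ) := by
      rw [dotProduct_smul, smul_eq_mul]
    have e3 : ((-(1/L)) • Δ) ⬝ᵥ ((-(1/L)) • Δ) = (1/L)^2 * (Δ ⬝ᵥ Δ) := by
      rw [smul_dotProduct, dotProduct_smul, smul_eq_mul, smul_eq_mul]
      ring
    rw [e2, e3] at hd
    rw [e1] at hs
    have e4 : f' v ⬝ᵥ Δ - f' u ⬝ᵥ Δ = Δ ⬝ᵥ Δ := by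
      rw [hΔ, sub_dotProduct, dotProduct_comm (f' v) (f' v - f' u),
        dotProduct_comm (f' u) (f' v - f' u), ← dotProduct_sub]
    have e5 : L/2 * ((1/L)^2 * (Δ ⬝ᵥ Δ)) = 1/(2*L) * (Δ ⬝ᵥ Δ) := by
      field_simp
    have e6 : (1/L) * (f' v ⬝ᵥ Δ) - (1/L) * (f' u ⬝ᵥ Δ) = (1/L) * (Δ ⬝ᵥ Δ) := by
      rw [← mul_sub, e4]
    have e7 : (1/L) * (Δ ⬝ᵥ Δ) - 1/(2*L) * (Δ ⬝ᵥ Δ) = 1/(2*L) * (Δ ⬝ᵥ Δ) := by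
      field_simp
      ring
    linarith [hs, hd]
  have h1 := half xx yy
  have h2 := half yy xx
  have s1 : (f' yy - f' xx) ⬝ᵥ (f' yy - f' xx) = (f' xx - f' yy) ⬝ᵥ (f' xx - f' yy) := by
    rw [show f' yy - f' xx = -(f' xx - f' yy) by abel, neg_dotProduct, dotProduct_neg, neg_neg]
  have s2 : f' xx ⬝ᵥ (yy - xx) + f' yy ⬝ᵥ (xx - yy) = -((f' xx - f' yy) ⬝ᵥ (xx - yy)) := by
    rw [sub_dotProduct, show (yy - xx : Fin N → ℝ) = -(xx - yy) by abel, dotProduct_neg]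
    ring
  rw [s1] at h1
  have hsum : (1/L) * ((f' xx - f' yy) ⬝ᵥ (f' xx - f' yy)) ≤ (f' xx - f' yy) ⬝ᵥ (xx - yy) := by
    have e : 2*((1/(2*L)) * ((f' xx - f' yy) ⬝ᵥ (f' xx - f' yy)))
        = (1/L) * ((f' xx - f' yy) ⬝ᵥ (f' xx - f' yy)) := by
      field_simp
    linarith [h1, h2, s2, e]
  calc (f' xx - f' yy) ⬝ᵥ (f' xx - f' yy)
      = L * ((1/L) * ((f' xx - f' yy) ⬝ᵥ (f' xx - f' yy))) := by field_simp
    _ ≤ L * ((f' xx - f' yy) ⬝ᵥ (xx - yy)) := mul_le_mul_of_nonneg_left hsum hL.le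

lemma subgrad_unique {N : ℕ} {f : (Fin N → ℝ) → ℝ} {f' : (Fin N → ℝ) → Fin N → ℝ} {L : ℝ}
    (hL : 0 < L)
    (hsub : ∀ x y, f x + f' x ⬝ᵥ (y - x) ≤ f y)
    (hlip : ∀ x y, Real.sqrt ((f' x - f' y) ⬝ᵥ (f' x - f' y))
      ≤ L * Real.sqrt ((x - y) ⬝ᵥ (x - y)))
    (x0 ξ : Fin N → ℝ)
    (hξ : ∀ y, f x0 + ξ ⬝ᵥ (y - x0) ≤ f y) : ξ = f' x0 := by
  set d : Fin N → ℝ := ξ - f' x0 with hddef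
  have key : ∀ s : ℝ, 0 < s → d ⬝ᵥ d ≤ L * s * (d ⬝ᵥ d) := by
    intro s hs
    have h1 := hξ (x0 + s • d)
    have h2 := hsub (x0 + s • d) x0
    have e1 : x0 + s • d - x0 = s • d := by abel
    have e2 : x0 - (x0 + s • d) = (-s) • d := by
      rw [neg_smul]; abel
    rw [e1, dotProduct_smul, smul_eq_mul] at h1
    rw [e2, dotProduct_smul, smul_eq_mul] at h2
    have hdiff : (f' (x0 + s • d) - f' x0) ⬝ᵥ d ≤ L * s * (d ⬝ᵥ d) := by
      have hcs := dp_cs (f' (x0 + s • d) - f' x0) d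
      have hl := hlip (x0 + s • d) x0
      rw [e1, sqrt_dp_smul s hs.le d] at hl
      have hss : Real.sqrt (d ⬝ᵥ d) * Real.sqrt (d ⬝ᵥ d) = d ⬝ᵥ d :=
        Real.mul_self_sqrt (dp_self_nonneg d)
      calc (f' (x0 + s • d) - f' x0) ⬝ᵥ d
          ≤ Real.sqrt ((f' (x0 + s • d) - f' x0) ⬝ᵥ (f' (x0 + s • d) - f' x0))
            * Real.sqrt (d ⬝ᵥ d) := hcs
        _ ≤ (L * (s * Real.sqrt (d ⬝ᵥ d))) * Real.sqrt (d ⬝ᵥ d) :=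
            mul_le_mul_of_nonneg_right hl (Real.sqrt_nonneg _)
        _ = L * s * (d ⬝ᵥ d) := by rw [mul_assoc, mul_assoc, hss]; ring
    have hsplit : f' (x0 + s • d) ⬝ᵥ d = f' x0 ⬝ᵥ d + (f' (x0 + s • d) - f' x0) ⬝ᵥ d := by
      rw [sub_dotProduct]; ring
    -- s * (ξ⬝ᵥd) ≤ s * (f'(x0+s•d)⬝ᵥd)
    have hmul : s * (ξ ⬝ᵥ d) ≤ s * (f' (x0 + s • d) ⬝ᵥ d) := by nlinarith [h1, h2]
    have hdd2 : ξ ⬝ᵥ d ≤ f' (x0 + s • d) ⬝ᵥ d := le_of_mul_le_mul_left hmul hs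
    have hfin : d ⬝ᵥ d = ξ ⬝ᵥ d - f' x0 ⬝ᵥ d := by
      rw [hddef, sub_dotProduct]
    linarith [hdd2, hsplit, hfin, hdiff]
  have hdd0 : d ⬝ᵥ d ≤ 0 := by
    by_contra h
    push_neg at h
    have := key (1/(2*L)) (by positivity)
    have e : L * (1/(2*L)) = 1/2 := by field_simp
    nlinarith
  have : d = 0 := dp_eq_zero hdd0
  have := sub_eq_zero.mp (hddef ▸ this)
  exact this

lemma final_ineq {R : ℕ} (c₁ L μ t : ℝ) (hc₁ : 0 < c₁) (hL : 0 < L) (hμpos : 0 < μ)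
    (ht0 : 0 < t) (htsq : t^2*μ < c₁*L) (hcμ : c₁*μ ≤ L)
    (a v vm u : Fin R → ℝ)
    (hP1 : c₁ * (a ⬝ᵥ a) ≤ -((u + t•vm - t•v) ⬝ᵥ a))
    (hP2 : μ * ((u + t•vm - t•v) ⬝ᵥ (u + t•vm - t•v)) ≤ L * (-((u + t•vm - t•v) ⬝ᵥ a)))
    (huv : u ⬝ᵥ v ≤ 0) :
    (u ⬝ᵥ u + t^2*(v ⬝ᵥ v)) * (c₁*L + 2*c₁*t*μ + t^2*μ)
      ≤ (c₁*L + t^2*μ) * (((u - t•(a+v)) ⬝ᵥ (u - t•(a+v))) + t^2*(vm ⬝ᵥ vm)) := by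
  have hD1 : 0 < c₁*L + t^2*μ - 2*c₁*t*μ := by
    rcases le_or_gt c₁ t with h | h
    · nlinarith [mul_le_mul_of_nonneg_right h (le_of_lt (mul_pos ht0 hμpos))]
    · nlinarith [mul_pos hμpos (mul_pos (sub_pos.mpr h) (sub_pos.mpr h)),
        mul_le_mul_of_nonneg_left hcμ hc₁.le]
  have hμΔ : 0 < c₁*L + 2*c₁*t*μ + t^2*μ := by positivity
  have hN1 : 0 < c₁*L + t^2*μ := by positivity
  have ha1 : 0 ≤ ((2*t*(c₁*L + 2*c₁*t*μ + t^2*μ)) * (c₁*L + t^2*μ - 2*c₁*t*μ)) * (-(u ⬝ᵥ v)) :=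
    mul_nonneg (mul_nonneg (by positivity) hD1.le) (by linarith)
  have ha2 : 0 ≤ ((c₁*L + t^2*μ) * (2*c₁*t))
      * (L * (-((u + t•vm - t•v) ⬝ᵥ a)) - μ * ((u + t•vm - t•v) ⬝ᵥ (u + t•vm - t•v))) :=
    mul_nonneg (by positivity) (by linarith)
  have ha3 : 0 ≤ ((c₁*L + t^2*μ) * (2*t^3*μ)) * ((-((u + t•vm - t•v) ⬝ᵥ a)) - c₁ * (a ⬝ᵥ a)) :=
    mul_nonneg (by positivity) (by linarith)
  have ha4 : 0 ≤ t^2 * (((c₁*L + t^2*μ - 2*c₁*t*μ) • (a + vm)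
        + (2*c₁*μ) • ((u + t•vm - t•v) + t•a))
      ⬝ᵥ ((c₁*L + t^2*μ - 2*c₁*t*μ) • (a + vm)
        + (2*c₁*μ) • ((u + t•vm - t•v) + t•a))) :=
    mul_nonneg (by positivity) (dp_self_nonneg _)
  have key : 0 ≤ (c₁*L + t^2*μ - 2*c₁*t*μ)
      * ((c₁*L + t^2*μ) * (((u - t•(a+v)) ⬝ᵥ (u - t•(a+v))) + t^2*(vm ⬝ᵥ vm))
        - (u ⬝ᵥ u + t^2*(v ⬝ᵥ v)) * (c₁*L + 2*c₁*t*μ + t^2*μ)) := by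
    simp only [smul_add, smul_sub, smul_smul, dotProduct_add, add_dotProduct,
      dotProduct_sub, sub_dotProduct, dotProduct_smul, smul_dotProduct, smul_eq_mul,
      dotProduct_neg, neg_dotProduct] at ha1 ha2 ha3 ha4 ⊢
    simp only [dotProduct_comm v a, dotProduct_comm vm a, dotProduct_comm u a,
      dotProduct_comm vm v, dotProduct_comm u v, dotProduct_comm u vm] at ha1 ha2 ha3 ha4 ⊢
    linarith [ha1, ha2, ha3, ha4]
  have := (mul_nonneg_iff_of_pos_left hD1).mp key
  linarith

end ADMM15

open ADMM15 in
theorem stmt15 {n m r : ℕ}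
    (A : Matrix (Fin r) (Fin n) ℝ) (B : Matrix (Fin r) (Fin m) ℝ) (b : Fin r → ℝ)
    (f : (Fin n → ℝ) → ℝ) (g : (Fin m → ℝ) → ℝ)
    (c₁ : ℝ) (hc₁ : 0 < c₁)
    (hf : ConvexOn ℝ Set.univ (fun y => f y - c₁ / 2 * ((A *ᵥ y) ⬝ᵥ (A *ᵥ y))))
    (hg : ConvexOn ℝ Set.univ g)
    -- f is differentiable with gradient f' (equivalently, for convex f: f' is a
    -- subgradient selection), and f' is L-Lipschitz:
    (f' : (Fin n → ℝ) → (Fin n → ℝ)) (L : ℝ) (hL : 0 < L)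
    (hf'sub : ∀ x y : Fin n → ℝ, f x + f' x ⬝ᵥ (y - x) ≤ f y)
    (hf'lip : ∀ x y : Fin n → ℝ,
      Real.sqrt ((f' x - f' y) ⬝ᵥ (f' x - f' y)) ≤ L * Real.sqrt ((x - y) ⬝ᵥ (x - y)))
    -- A has full row rank, and μ = λ_min(AAᵀ):
    (hArank : A.rank = r)
    (μ : ℝ) (hμ : IsGreatest {c : ℝ | ∀ v : Fin r → ℝ, c * (v ⬝ᵥ v) ≤ v ⬝ᵥ ((A * Aᵀ) *ᵥ v)} μ)
    (t : ℝ) (ht0 : 0 < t) (ht : t < Real.sqrt (c₁ * L / μ))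
    -- ADMM iterations with step t, from λ⁰ = lam 0 and z⁰ = z 0:
    (x : ℕ → Fin n → ℝ) (z : ℕ → Fin m → ℝ) (lam : ℕ → Fin r → ℝ)
    (hxmin : ∀ k, 1 ≤ k → ∀ x' : Fin n → ℝ,
      f (x k) + lam (k - 1) ⬝ᵥ (A *ᵥ x k)
          + t / 2 * ((A *ᵥ x k + B *ᵥ z (k - 1) - b) ⬝ᵥ (A *ᵥ x k + B *ᵥ z (k - 1) - b))
        ≤ f x' + lam (k - 1) ⬝ᵥ (A *ᵥ x')
          + t / 2 * ((A *ᵥ x' + B *ᵥ z (k - 1) - b) ⬝ᵥ (A *ᵥ x' + B *ᵥ z (k - 1) - b)))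
    (hzmin : ∀ k, 1 ≤ k → ∀ z' : Fin m → ℝ,
      g (z k) + lam (k - 1) ⬝ᵥ (B *ᵥ z k)
          + t / 2 * ((A *ᵥ x k + B *ᵥ z k - b) ⬝ᵥ (A *ᵥ x k + B *ᵥ z k - b))
        ≤ g z' + lam (k - 1) ⬝ᵥ (B *ᵥ z')
          + t / 2 * ((A *ᵥ x k + B *ᵥ z' - b) ⬝ᵥ (A *ᵥ x k + B *ᵥ z' - b)))
    (hlamit : ∀ k, 1 ≤ k → lam k = lam (k - 1) + t • (A *ᵥ x k + B *ᵥ z k - b))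
    -- (x*, z*) optimal with Lagrange multiplier λ*:
    (xstar : Fin n → ℝ) (zstar : Fin m → ℝ) (lamstar : Fin r → ℝ)
    (hfeas : A *ᵥ xstar + B *ᵥ zstar = b)
    (hfstar : f' xstar = -(Aᵀ *ᵥ lamstar))
    (hgsub : ∀ w : Fin m → ℝ, g zstar + (-(Bᵀ *ᵥ lamstar)) ⬝ᵥ (w - zstar) ≤ g w) :
    ∀ k : ℕ,
      (lam (k + 1) - lamstar) ⬝ᵥ (lam (k + 1) - lamstar)
          + t ^ 2 * ((B *ᵥ (z (k + 1) - zstar)) ⬝ᵥ (B *ᵥ (z (k + 1) - zstar)))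
        ≤ (1 - 2 * c₁ * t / (c₁ * (L / μ) + 2 * c₁ * t + t ^ 2))
          * ((lam k - lamstar) ⬝ᵥ (lam k - lamstar)
            + t ^ 2 * ((B *ᵥ (z k - zstar)) ⬝ᵥ (B *ᵥ (z k - zstar)))) := by
  have hμpos : 0 < μ := by
    by_contra h
    push_neg at h
    have h2 : c₁ * L / μ ≤ 0 := by
      rcases h.lt_or_eq with h' | h'
      · exact (div_neg_of_pos_of_neg (mul_pos hc₁ hL) h').le
      · simp [h']
    have h3 : Real.sqrt (c₁ * L / μ) = 0 := Real.sqrt_eq_zero'.mpr h2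
    rw [h3] at ht
    linarith
  have htsq : t^2 * μ < c₁ * L := by
    have h1 : t^2 < c₁ * L / μ := (Real.lt_sqrt ht0.le).mp ht
    calc t^2*μ < (c₁*L/μ)*μ := mul_lt_mul_of_pos_right h1 hμpos
      _ = c₁*L := by field_simp
  have hsm := fun xx yy => strong_mono hf hf'sub xx yy
  have hAL : ∀ uu : Fin n → ℝ, c₁ * ((A *ᵥ uu) ⬝ᵥ (A *ᵥ uu)) ≤ L * (uu ⬝ᵥ uu) := by
    intro uu
    have h1 := hsm uu 0
    rw [sub_zero] at h1
    have h2 := dp_cs (f' uu - f' 0) uu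
    have h3 := hf'lip uu 0
    rw [sub_zero] at h3
    have h4 := mul_le_mul_of_nonneg_right h3 (Real.sqrt_nonneg (uu ⬝ᵥ uu))
    have h5 : Real.sqrt (uu ⬝ᵥ uu) * Real.sqrt (uu ⬝ᵥ uu) = uu ⬝ᵥ uu :=
      Real.mul_self_sqrt (dp_self_nonneg uu)
    have h6 : L * (Real.sqrt (uu ⬝ᵥ uu) * Real.sqrt (uu ⬝ᵥ uu)) = L * (uu ⬝ᵥ uu) := by
      rw [h5]
    nlinarith [h1, h2, h4, h6]
  have hcμ : c₁ * μ ≤ L := by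
    rcases Nat.eq_zero_or_pos r with hr | hr
    · exfalso
      have hemp : IsEmpty (Fin r) := by subst hr; infer_instance
      have h1 : (μ+1) ∈ {c : ℝ | ∀ v : Fin r → ℝ, c * (v ⬝ᵥ v) ≤ v ⬝ᵥ ((A * Aᵀ) *ᵥ v)} := by
        intro vv
        have h2 : vv ⬝ᵥ vv = 0 := by simp [dotProduct, Finset.univ_eq_empty]
        have h3 : vv ⬝ᵥ ((A * Aᵀ) *ᵥ vv) = 0 := by simp [dotProduct, Finset.univ_eq_empty]
        rw [h2, h3, mul_zero]
      have := hμ.2 h1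
      linarith
    · set v0 : Fin r → ℝ := Pi.single ⟨0, hr⟩ 1 with hv0def
      have hv0 : v0 ⬝ᵥ v0 = 1 := by
        simp [hv0def, dotProduct, Pi.single_apply]
      have hm := hμ.1 v0
      rw [hv0, mul_one] at hm
      have h5 := hAL (Aᵀ *ᵥ v0)
      have h6 : A *ᵥ (Aᵀ *ᵥ v0) = (A * Aᵀ) *ᵥ v0 := Matrix.mulVec_mulVec v0 A Aᵀ
      have h7 : (Aᵀ *ᵥ v0) ⬝ᵥ (Aᵀ *ᵥ v0) = v0 ⬝ᵥ ((A * Aᵀ) *ᵥ v0) := by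
        rw [transpose_dot, h6]
      rw [h6, h7] at h5
      have h8 := dp_cs v0 ((A * Aᵀ) *ᵥ v0)
      rw [hv0, Real.sqrt_one, one_mul] at h8
      have h10 : (v0 ⬝ᵥ ((A * Aᵀ) *ᵥ v0))^2 ≤ ((A * Aᵀ) *ᵥ v0) ⬝ᵥ ((A * Aᵀ) *ᵥ v0) := by
        nlinarith [Real.mul_self_sqrt (dp_self_nonneg ((A * Aᵀ) *ᵥ v0)),
          Real.sqrt_nonneg (((A * Aᵀ) *ᵥ v0) ⬝ᵥ ((A * Aᵀ) *ᵥ v0)), h8, hμpos.trans_le hm]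
      have hm0 : 0 < v0 ⬝ᵥ ((A * Aᵀ) *ᵥ v0) := hμpos.trans_le hm
      nlinarith [h5, mul_le_mul_of_nonneg_left h10 hc₁.le,
        mul_nonneg (mul_nonneg hc₁.le (sub_nonneg.mpr hm)) hm0.le, hm0]
  intro k
  have hK1 : 1 ≤ k + 1 := Nat.le_add_left 1 k
  have hKm : k + 1 - 1 = k := by omega
  have hfconv : ConvexOn ℝ Set.univ f := convex_of_subgrad hf'sub
  -- x-update subgradient
  have hxarg : ∀ x' : Fin n → ℝ,
      f (x (k+1)) + (Aᵀ *ᵥ lam k) ⬝ᵥ (x (k+1))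
          + t/2 * ((A *ᵥ x (k+1) + (B *ᵥ z k - b)) ⬝ᵥ (A *ᵥ x (k+1) + (B *ᵥ z k - b)))
        ≤ f x' + (Aᵀ *ᵥ lam k) ⬝ᵥ x'
          + t/2 * ((A *ᵥ x' + (B *ᵥ z k - b)) ⬝ᵥ (A *ᵥ x' + (B *ᵥ z k - b))) := by
    intro x'
    have h := hxmin (k+1) hK1 x'
    rw [hKm] at h
    simpa only [transpose_dot, add_sub_assoc] using h
  have hξx := subgrad_of_argmin hfconv A (Aᵀ *ᵥ lam k) (B *ᵥ z k - b) t (x (k+1)) hxarg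
  have hfx := subgrad_unique hL hf'sub hf'lip (x (k+1)) _ hξx
  -- z-update subgradient
  have hzarg : ∀ z' : Fin m → ℝ,
      g (z (k+1)) + (Bᵀ *ᵥ lam k) ⬝ᵥ (z (k+1))
          + t/2 * ((B *ᵥ z (k+1) + (A *ᵥ x (k+1) - b)) ⬝ᵥ (B *ᵥ z (k+1) + (A *ᵥ x (k+1) - b)))
        ≤ g z' + (Bᵀ *ᵥ lam k) ⬝ᵥ z'
          + t/2 * ((B *ᵥ z' + (A *ᵥ x (k+1) - b)) ⬝ᵥ (B *ᵥ z' + (A *ᵥ x (k+1) - b))) := by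
    intro z'
    have h := hzmin (k+1) hK1 z'
    rw [hKm] at h
    have e : ∀ zz : Fin m → ℝ, A *ᵥ x (k+1) + B *ᵥ zz - b = B *ᵥ zz + (A *ᵥ x (k+1) - b) := by
      intro zz; abel
    rw [e (z (k+1)), e z'] at h
    simpa only [transpose_dot] using h
  have hξz := subgrad_of_argmin hg B (Bᵀ *ᵥ lam k) (A *ᵥ x (k+1) - b) t (z (k+1)) hzarg
  -- iterate relation
  have hlamK : lam (k+1) = lam k + t • (A *ᵥ x (k+1) + B *ᵥ z (k+1) - b) := by
    have h := hlamit (k+1) hK1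
    rwa [hKm] at h
  -- fold goal
  rw [Matrix.mulVec_sub B (z (k+1)) zstar, Matrix.mulVec_sub B (z k) zstar]
  set a : Fin r → ℝ := A *ᵥ x (k+1) - A *ᵥ xstar with hadef
  set v : Fin r → ℝ := B *ᵥ z (k+1) - B *ᵥ zstar with hvdef
  set vm : Fin r → ℝ := B *ᵥ z k - B *ᵥ zstar with hvmdef
  set u : Fin r → ℝ := lam (k+1) - lamstar with hudef
  have hres : A *ᵥ x (k+1) + B *ᵥ z (k+1) - b = a + v := by
    rw [hadef, hvdef, ← hfeas]; abel
  have hresm : A *ᵥ x (k+1) + B *ᵥ z k - b = a + vm := by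
    rw [hadef, hvmdef, ← hfeas]; abel
  -- gradient identity
  have hw : f' (x (k+1)) - f' xstar = -(Aᵀ *ᵥ (u + t•vm - t•v)) := by
    have e1 : u + t•vm - t•v = lam k + t • (A *ᵥ x (k+1) + B *ᵥ z k - b) - lamstar := by
      rw [hresm, hudef, hlamK, hres]; module
    rw [← hfx, hfstar, e1]
    have e2 : A *ᵥ x (k+1) + (B *ᵥ z k - b) = A *ᵥ x (k+1) + B *ᵥ z k - b :=
      (add_sub_assoc _ _ _).symm
    rw [e2]
    simp only [Matrix.mulVec_sub, Matrix.mulVec_add, Matrix.mulVec_smul]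
    module
  -- strong monotonicity
  have e3 : A *ᵥ (x (k+1) - xstar) = a := by rw [Matrix.mulVec_sub, hadef]
  have hP1 : c₁ * (a ⬝ᵥ a) ≤ -((u + t•vm - t•v) ⬝ᵥ a) := by
    have h1 := hsm (x (k+1)) xstar
    rw [e3, hw, neg_dotProduct, transpose_dot, e3] at h1
    exact h1
  -- cocoercivity + eigenvalue bound
  have hP2 : μ * ((u + t•vm - t•v) ⬝ᵥ (u + t•vm - t•v)) ≤ L * (-((u + t•vm - t•v) ⬝ᵥ a)) := by
    have h2 := coco hL hf'sub hf'lip (x (k+1)) xstar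
    rw [hw, neg_dotProduct, dotProduct_neg, neg_neg, transpose_dot,
      Matrix.mulVec_mulVec, neg_dotProduct, transpose_dot, e3] at h2
    have h3 := hμ.1 (u + t•vm - t•v)
    linarith [h2, h3]
  -- dual monotonicity for g
  have huv : u ⬝ᵥ v ≤ 0 := by
    have h1 := hξz zstar
    have h2 := hgsub (z (k+1))
    have e4 : B *ᵥ z (k+1) + (A *ᵥ x (k+1) - b) = A *ᵥ x (k+1) + B *ᵥ z (k+1) - b := by abel
    have e5 : -(Bᵀ *ᵥ lam k) - t • (Bᵀ *ᵥ (B *ᵥ z (k+1) + (A *ᵥ x (k+1) - b)))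
        = -(Bᵀ *ᵥ lam (k+1)) := by
      rw [e4, hlamK]
      simp only [Matrix.mulVec_sub, Matrix.mulVec_add, Matrix.mulVec_smul]
      module
    rw [e5] at h1
    have e6 : (-(Bᵀ *ᵥ lam (k+1))) ⬝ᵥ (zstar - z (k+1))
        + (-(Bᵀ *ᵥ lamstar)) ⬝ᵥ (z (k+1) - zstar) = u ⬝ᵥ v := by
      rw [show zstar - z (k+1) = -(z (k+1) - zstar) by abel, dotProduct_neg,
        neg_dotProduct, neg_dotProduct, neg_neg, hudef, hvdef]
      rw [show (Bᵀ *ᵥ lam (k+1)) ⬝ᵥ (z (k+1) - zstar)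
          + -((Bᵀ *ᵥ lamstar) ⬝ᵥ (z (k+1) - zstar))
          = (Bᵀ *ᵥ (lam (k+1) - lamstar)) ⬝ᵥ (z (k+1) - zstar) by
        rw [Matrix.mulVec_sub, sub_dotProduct]; ring]
      rw [transpose_dot, Matrix.mulVec_sub]
    linarith [h1, h2, e6]
  -- final inequality
  have hfinal := final_ineq c₁ L μ t hc₁ hL hμpos ht0 htsq hcμ a v vm u hP1 hP2 huv
  have hup : lam k - lamstar = u - t•(a+v) := by
    rw [hudef, hlamK, hres]; module
  have hμΔ : 0 < c₁*L + 2*c₁*t*μ + t^2*μ := by positivity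
  have hrate : 1 - 2 * c₁ * t / (c₁ * (L / μ) + 2 * c₁ * t + t ^ 2)
      = (c₁*L + t^2*μ) / (c₁*L + 2*c₁*t*μ + t^2*μ) := by
    have hden : c₁ * (L / μ) + 2 * c₁ * t + t ^ 2 = (c₁*L + 2*c₁*t*μ + t^2*μ)/μ := by
      field_simp
    rw [hden, div_div_eq_mul_div, eq_div_iff hμΔ.ne', sub_mul, one_mul,
      div_mul_cancel₀ _ hμΔ.ne']
    ring
  rw [hrate, div_mul_eq_mul_div, le_div_iff₀ hμΔ, hup]
  exact hfinal
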